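/- Let a ≥ 1 and b ≥ 0 be integers, let G be a finite simple graph such that every subgraph G' of G satisfies |E(G')| ≤ a·|V(G')| − b, and let M be a matching of G. Then every subgraph H of the contracted graph G_M satisfies |E(H)| ≤ (2a−1)·|V(H)| − b; that is, G_M is a (2a−1, b)-graph. -/

import Mathlib

/-- `M` is a matching of `G`, viewed as a set of edges:
all edges lie in `G` and are pairwise non-adjacent (share no vertex). -/
def IsMatchingSet {V : Type*} (G : SimpleGraph V) (M : Set (Sym2 V)) : Prop :=
  M ⊆ G.edgeSet ∧ ∀ e ∈ M, ∀ f ∈ M, e ≠ f → ∀ v : V, ¬(v ∈ e ∧ v ∈ f)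

/-- The graph obtained from `G` by contracting each edge in `M`
(identifying the endpoints of every edge of `M`, deleting loops and
merging parallel edges). -/
def Contract {V : Type*} (G : SimpleGraph V) (M : Set (Sym2 V)) :
    SimpleGraph (Quot fun u v : V => s(u, v) ∈ M) where
  Adj x y := x ≠ y ∧ ∃ u v : V, G.Adj u v ∧ Quot.mk _ u = x ∧ Quot.mk _ v = y
  symm := by
    constructor
    rintro x y ⟨hxy, u, v, huv, hu, hv⟩
    exact ⟨hxy.symm, v, u, huv.symm, hv, hu⟩
  loopless := by
    constructor
    rintro x ⟨hx, -⟩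
    exact hx rfl

/-- If every (nonempty) subgraph `G'` of `G` satisfies `|E(G')| ≤ a·|V(G')| − b`
(with `a ≥ 1`, `b ≥ 0`), and `M` is a matching of `G`, then every (nonempty)
subgraph `H` of the contracted graph `G_M` satisfies
`|E(H)| ≤ (2a−1)·|V(H)| − b`. -/
theorem stmt_0 {V : Type*} [Fintype V] (G : SimpleGraph V) (a b : ℤ)
    (ha : 1 ≤ a) (hb : 0 ≤ b)
    (hG : ∀ G' : G.Subgraph, G'.verts.Nonempty →
      (G'.edgeSet.ncard : ℤ) ≤ a * (G'.verts.ncard : ℤ) - b)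
    (M : Set (Sym2 V)) (hM : IsMatchingSet G M) :
    ∀ H : (Contract G M).Subgraph, H.verts.Nonempty →
      (H.edgeSet.ncard : ℤ) ≤ (2 * a - 1) * (H.verts.ncard : ℤ) - b := by
  classical
  intro H hH
  set r : V → V → Prop := fun u v => s(u, v) ∈ M with hr
  haveI : Finite (Quot r) := Finite.of_surjective (Quot.mk r) fun q => Quot.exists_rep q
  have hMG : M ⊆ G.edgeSet := hM.1
  have hMe := hM.2
  have htrans : ∀ {u v w : V}, s(u, v) ∈ M → s(v, w) ∈ M → u = w := by
    intro u v w h1 h2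
    by_contra hne'
    by_cases he : s(u, v) = s(v, w)
    · rw [Sym2.eq_iff] at he
      rcases he with ⟨h3, h4⟩ | ⟨h3, h4⟩
      · exact hne' (h3.trans h4)
      · exact hne' h3
    · exact hMe _ h1 _ h2 he v ⟨Sym2.mem_mk_right u v, Sym2.mem_mk_left v w⟩
  have hL : ∀ {u w : V}, Quot.mk r u = Quot.mk r w → u = w ∨ s(u, w) ∈ M := by
    intro u w h
    have h' := Quot.eq.mp h
    clear h
    induction h' with
    | rel x y hxy => exact Or.inr hxy
    | refl x => exact Or.inl rfl
    | symm x y _ ih =>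
        rcases ih with h | h
        · exact Or.inl h.symm
        · exact Or.inr (Sym2.eq_swap ▸ h)
    | trans x y z _ _ ih1 ih2 =>
        rcases ih1 with rfl | h1
        · exact ih2
        · rcases ih2 with rfl | h2
          · exact Or.inr h1
          · exact Or.inl (htrans h1 h2)
  -- the preimage subgraph
  let G' : G.Subgraph :=
    { verts := {v | Quot.mk r v ∈ H.verts}
      Adj := fun u v => (G.Adj u v ∧ H.Adj (Quot.mk r u) (Quot.mk r v)) ∨
        (s(u, v) ∈ M ∧ Quot.mk r u ∈ H.verts)
      adj_sub := by
        rintro u v (⟨h, -⟩ | ⟨h, -⟩)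
        · exact h
        · exact (SimpleGraph.mem_edgeSet G).mp (hMG h)
      edge_vert := by
        rintro u v (⟨-, h⟩ | ⟨-, h⟩)
        · exact H.edge_vert h
        · exact h
      symm := by
        constructor
        rintro u v (⟨h1, h2⟩ | ⟨h1, h2⟩)
        · exact Or.inl ⟨h1.symm, h2.symm⟩
        · refine Or.inr ⟨Sym2.eq_swap ▸ h1, ?_⟩
          have : Quot.mk r u = Quot.mk r v := Quot.sound h1
          rwa [← this] }
  have hG'verts : G'.verts = {v | Quot.mk r v ∈ H.verts} := rfl
  have hG'adj : ∀ u v : V, G'.Adj u v ↔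
      ((G.Adj u v ∧ H.Adj (Quot.mk r u) (Quot.mk r v)) ∨
        (s(u, v) ∈ M ∧ Quot.mk r u ∈ H.verts)) := fun _ _ => Iff.rfl
  -- out function
  set o : V → V := fun v => Quot.out (Quot.mk r v) with ho_def
  have ho : ∀ v, Quot.mk r (o v) = Quot.mk r v := fun v => Quot.out_eq _
  obtain ⟨x0, hx0⟩ := hH
  haveI : Nonempty V := ⟨Quot.out x0⟩
  -- the set of non-canonical vertices
  set S : Set V := {v | v ∈ G'.verts ∧ v ≠ o v} with hS_def
  have hSM : ∀ v ∈ S, s(v, o v) ∈ M := by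
    intro v hv
    rcases hL (ho v).symm with h | h
    · exact absurd h hv.2
    · exact h
  have hoverts : ∀ v ∈ G'.verts, o v ∈ G'.verts := by
    intro v hv
    show Quot.mk r (o v) ∈ H.verts
    rw [ho v]; exact hv
  -- ψ image is in edge set
  set ψ : V → Sym2 V := fun v => s(v, o v) with hψ_def
  have hψmem : ∀ v ∈ S, ψ v ∈ G'.edgeSet := by
    intro v hv
    rw [SimpleGraph.Subgraph.mem_edgeSet]
    exact Or.inr ⟨hSM v hv, hv.1⟩
  have hψinj : Set.InjOn ψ S := by
    intro v hv w hw h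
    rw [Sym2.eq_iff] at h
    rcases h with ⟨h1, h2⟩ | ⟨h1, h2⟩
    · exact h1
    · -- v = o w and o v = w
      exfalso
      have : Quot.mk r v = Quot.mk r w := by rw [h1, ho w]
      have how : o v = o w := by rw [ho_def]; simp only []; rw [this]
      exact hw.2 (h2.symm.trans how)
  have hψdiag : ∀ v ∈ S, (Sym2.map (Quot.mk r) (ψ v)).IsDiag := by
    intro v hv
    rw [hψ_def]
    simp only [Sym2.map_pair_eq, Sym2.mk_isDiag_iff]
    exact (ho v).symm
  -- representative edges
  have hrep0 : ∀ f : Sym2 (Quot r), f ∈ H.edgeSet →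
      ∃ e : Sym2 V, e ∈ G'.edgeSet ∧ Sym2.map (Quot.mk r) e = f := by
    intro f
    induction f using Sym2.ind with
    | _ x y =>
      intro hf
      rw [SimpleGraph.Subgraph.mem_edgeSet] at hf
      obtain ⟨hxy, u, v, huv, hu, hv⟩ := H.adj_sub hf
      refine ⟨s(u, v), ?_, ?_⟩
      · rw [SimpleGraph.Subgraph.mem_edgeSet]
        exact Or.inl ⟨huv, by rw [hu, hv]; exact hf⟩
      · rw [Sym2.map_pair_eq, hu, hv]
  set rep : Sym2 (Quot r) → Sym2 V := fun f =>
    if h : f ∈ H.edgeSet then (hrep0 f h).choose else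
      s(Classical.arbitrary V, Classical.arbitrary V) with hrep_def
  have hrep1 : ∀ f ∈ H.edgeSet, rep f ∈ G'.edgeSet ∧ Sym2.map (Quot.mk r) (rep f) = f := by
    intro f hf
    rw [hrep_def]
    simp only [dif_pos hf]
    exact (hrep0 f hf).choose_spec
  have hrepinj : Set.InjOn rep H.edgeSet := by
    intro f hf g hg h
    rw [← (hrep1 f hf).2, ← (hrep1 g hg).2, h]
  have hrepnotψ : ∀ f ∈ H.edgeSet, rep f ∈ G'.edgeSet \ (ψ '' S) := by
    intro f hf
    refine ⟨(hrep1 f hf).1, ?_⟩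
    rintro ⟨v, hv, hveq⟩
    have hd : (Sym2.map (Quot.mk r) (rep f)).IsDiag := hveq ▸ hψdiag v hv
    rw [(hrep1 f hf).2] at hd
    exact SimpleGraph.not_isDiag_of_mem_edgeSet _ (SimpleGraph.Subgraph.edgeSet_subset H hf) hd
  -- counting
  have h1 : H.edgeSet.ncard + S.ncard ≤ G'.edgeSet.ncard := by
    have e1 : H.edgeSet.ncard ≤ (G'.edgeSet \ (ψ '' S)).ncard :=
      Set.ncard_le_ncard_of_injOn rep hrepnotψ hrepinj (Set.toFinite _)
    have e2 : (ψ '' S).ncard = S.ncard := Set.ncard_image_of_injOn hψinj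
    have e3 : (G'.edgeSet \ (ψ '' S)).ncard + (ψ '' S).ncard = G'.edgeSet.ncard :=
      Set.ncard_diff_add_ncard_of_subset (by
        rintro e ⟨v, hv, rfl⟩
        exact hψmem v hv) (Set.toFinite _)
    omega
  have h2 : G'.verts.ncard ≤ H.verts.ncard + S.ncard := by
    have hsplit : G'.verts ⊆ {v | v ∈ G'.verts ∧ v = o v} ∪ S := by
      intro v hv
      by_cases h : v = o v
      · exact Or.inl ⟨hv, h⟩
      · exact Or.inr ⟨hv, h⟩
    have e1 : G'.verts.ncard ≤ ({v | v ∈ G'.verts ∧ v = o v} ∪ S).ncard :=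
      Set.ncard_le_ncard hsplit (Set.toFinite _)
    have e2 : ({v | v ∈ G'.verts ∧ v = o v} ∪ S).ncard ≤
        ({v | v ∈ G'.verts ∧ v = o v} : Set V).ncard + S.ncard := Set.ncard_union_le _ _
    have e3 : ({v | v ∈ G'.verts ∧ v = o v} : Set V).ncard ≤ H.verts.ncard := by
      refine Set.ncard_le_ncard_of_injOn (Quot.mk r) (fun v hv => hv.1) ?_ (Set.toFinite _)
      intro v hv w hw h
      have : o v = o w := by rw [ho_def]; simp only []; rw [h]
      rw [hv.2, hw.2, this]
    omega
  have h3 : S.ncard ≤ H.verts.ncard := by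
    refine Set.ncard_le_ncard_of_injOn (Quot.mk r) (fun v hv => hv.1) ?_ (Set.toFinite _)
    intro v hv w hw h
    by_contra hne'
    have hvw : s(v, w) ∈ M := by
      rcases hL h with h' | h'
      · exact absurd h' hne'
      · exact h'
    have hvo : s(v, o v) ∈ M := hSM v hv
    by_cases he : s(v, w) = s(v, o v)
    · rw [Sym2.eq_iff] at he
      rcases he with ⟨-, h4⟩ | ⟨h3', h4⟩
      · -- w = o v, but o v = o w
        have : o v = o w := by rw [ho_def]; simp only []; rw [h]
        exact hw.2 (h4.trans this)
      · exact hv.2 h3'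
    · exact hMe _ hvw _ hvo he v ⟨Sym2.mem_mk_left v w, Sym2.mem_mk_left v (o v)⟩
  have h4 : (G'.edgeSet.ncard : ℤ) ≤ a * (G'.verts.ncard : ℤ) - b := by
    refine hG G' ⟨Quot.out x0, ?_⟩
    show Quot.mk r (Quot.out x0) ∈ H.verts
    rw [Quot.out_eq]; exact hx0
  -- final arithmetic
  have c1 : (H.edgeSet.ncard : ℤ) + (S.ncard : ℤ) ≤ (G'.edgeSet.ncard : ℤ) := by
    exact_mod_cast h1
  have c2 : (G'.verts.ncard : ℤ) ≤ (H.verts.ncard : ℤ) + (S.ncard : ℤ) := by exact_mod_cast h2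
  have c3 : (S.ncard : ℤ) ≤ (H.verts.ncard : ℤ) := by exact_mod_cast h3
  have p1 : a * (G'.verts.ncard : ℤ) ≤ a * ((H.verts.ncard : ℤ) + (S.ncard : ℤ)) :=
    mul_le_mul_of_nonneg_left c2 (by linarith)
  have p2 : (a - 1) * (S.ncard : ℤ) ≤ (a - 1) * (H.verts.ncard : ℤ) :=
    mul_le_mul_of_nonneg_left c3 (by linarith)
  nlinarith [c1, h4, p1, p2]
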